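/- Let p > 1 and q = p/(p-1). Define f_p(z) = z^{p-1}[((1+1/z)^{1/q} - 1)^{p-1} - (1 - (1-1/z)^{1/q})^{p-1}] for z in the upper half-plane, using principal branches of complex powers. Then f_p(-z) = -f_p(z) for all z with Im z > 0, where f_p on the lower half-plane is defined by the same formula. -/

import Mathlib

open Complex

private lemma neg_cpow_of_im_neg {w : ℂ} (hw : w.im < 0) (t : ℝ) :
    (-w) ^ (t : ℂ) = w ^ (t : ℂ) * exp ((Real.pi : ℂ) * t * I) := by
  have hw0 : w ≠ 0 := fun h => by simp [h] at hw
  rw [cpow_def_of_ne_zero (neg_ne_zero.2 hw0), cpow_def_of_ne_zero hw0, ← Complex.exp_add]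
  congr 1
  rw [Complex.log, Complex.log, norm_neg, arg_neg_eq_arg_add_pi_of_im_neg hw]
  push_cast
  ring

private lemma neg_cpow_of_im_pos {w : ℂ} (hw : 0 < w.im) (t : ℝ) :
    (-w) ^ (t : ℂ) = w ^ (t : ℂ) * exp (-((Real.pi : ℂ) * t) * I) := by
  have hw0 : w ≠ 0 := fun h => by simp [h] at hw
  rw [cpow_def_of_ne_zero (neg_ne_zero.2 hw0), cpow_def_of_ne_zero hw0, ← Complex.exp_add]
  congr 1
  rw [Complex.log, Complex.log, norm_neg, arg_neg_eq_arg_sub_pi_of_im_pos hw]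
  push_cast
  ring

private lemma im_cpow_neg {w : ℂ} (hw : w.im < 0) {t : ℝ} (ht : 0 < t) (ht1 : t ≤ 1) :
    (w ^ (t : ℂ)).im < 0 := by
  have hw0 : w ≠ 0 := fun h => by simp [h] at hw
  rw [cpow_ofReal_im]
  apply mul_neg_of_pos_of_neg
  · exact Real.rpow_pos_of_pos (norm_pos_iff.mpr hw0) t
  · apply Real.sin_neg_of_neg_of_neg_pi_lt
    · exact mul_neg_of_neg_of_pos (arg_neg_iff.2 hw) ht
    · nlinarith [neg_pi_lt_arg w, arg_neg_iff.2 hw]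

private lemma im_cpow_pos {w : ℂ} (hw : 0 < w.im) {t : ℝ} (ht : 0 < t) (ht1 : t ≤ 1) :
    0 < (w ^ (t : ℂ)).im := by
  have hw0 : w ≠ 0 := fun h => by simp [h] at hw
  have harg : 0 < arg w := by
    rcases (arg_nonneg_iff.2 hw.le).lt_or_eq with h | h
    · exact h
    · exact absurd (arg_eq_zero_iff.1 h.symm).2 hw.ne'
  have harg' : arg w < Real.pi := arg_lt_pi_iff.2 (Or.inr hw.ne')
  rw [cpow_ofReal_im]
  apply mul_pos
  · exact Real.rpow_pos_of_pos (norm_pos_iff.mpr hw0) t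
  · apply Real.sin_pos_of_pos_of_lt_pi
    · exact mul_pos harg ht
    · nlinarith

/-- The function `f_p` from the optimal discrete `p`-Hardy weight, with principal
branch complex powers. -/
noncomputable def fp (p q : ℝ) (z : ℂ) : ℂ :=
  z ^ ((p - 1 : ℝ) : ℂ) *
    (((1 + 1 / z) ^ ((1 / q : ℝ) : ℂ) - 1) ^ ((p - 1 : ℝ) : ℂ) -
      (1 - (1 - 1 / z) ^ ((1 / q : ℝ) : ℂ)) ^ ((p - 1 : ℝ) : ℂ))

theorem stmt_7 (p : ℝ) (hp : 1 < p) (q : ℝ) (hq : q = p / (p - 1)) :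
    ∀ z : ℂ, 0 < z.im → fp p q (-z) = -fp p q z := by
  intro z hz
  have hp1 : 0 < p - 1 := by linarith
  have hq1 : 1 < q := by
    rw [hq, lt_div_iff₀ hp1]; linarith
  have hql : 0 < 1 / q := by positivity
  have hqu : 1 / q ≤ 1 := by
    rw [div_le_one (by linarith)]; linarith
  have hz0 : z ≠ 0 := fun h => by simp [h] at hz
  have hinv : (1 / z).im < 0 := by
    rw [one_div, inv_im]
    exact div_neg_of_neg_of_pos (by linarith) (normSq_pos.2 hz0)
  have h1 : (1 + 1 / z).im < 0 := by simpa using hinv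
  have h2 : 0 < (1 - 1 / z).im := by simpa using hinv
  set A : ℂ := (1 + 1 / z) ^ ((1 / q : ℝ) : ℂ) with hA
  set B : ℂ := (1 - 1 / z) ^ ((1 / q : ℝ) : ℂ) with hB
  have ha : (A - 1).im < 0 := by
    rw [hA, sub_im, one_im, sub_zero]; exact im_cpow_neg h1 hql hqu
  have hb : ((1 : ℂ) - B).im < 0 := by
    rw [hB, sub_im, one_im, zero_sub]; linarith [im_cpow_pos h2 hql hqu]
  have e1 : 1 + 1 / (-z) = 1 - 1 / z := by rw [div_neg]; ring
  have e2 : 1 - 1 / (-z) = 1 + 1 / z := by rw [div_neg]; ring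
  have eb : B - 1 = -(1 - B) := by ring
  have ea : (1 : ℂ) - A = -(A - 1) := by ring
  rw [fp, fp, e1, e2, ← hA, ← hB, eb, ea,
    neg_cpow_of_im_pos hz (p - 1), neg_cpow_of_im_neg hb (p - 1),
    neg_cpow_of_im_neg ha (p - 1)]
  have hexp : exp (-((Real.pi : ℂ) * ((p - 1 : ℝ) : ℂ)) * I) * exp ((Real.pi : ℂ) * ((p - 1 : ℝ) : ℂ) * I) = 1 := by
    rw [← Complex.exp_add]; ring_nf; exact Complex.exp_zero
  calc z ^ ((p - 1 : ℝ) : ℂ) * exp (-((Real.pi : ℂ) * ((p - 1 : ℝ) : ℂ)) * I) *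
      ((1 - B) ^ ((p - 1 : ℝ) : ℂ) * exp ((Real.pi : ℂ) * ((p - 1 : ℝ) : ℂ) * I) -
        (A - 1) ^ ((p - 1 : ℝ) : ℂ) * exp ((Real.pi : ℂ) * ((p - 1 : ℝ) : ℂ) * I))
      = (exp (-((Real.pi : ℂ) * ((p - 1 : ℝ) : ℂ)) * I) * exp ((Real.pi : ℂ) * ((p - 1 : ℝ) : ℂ) * I)) *
        (z ^ ((p - 1 : ℝ) : ℂ) * ((1 - B) ^ ((p - 1 : ℝ) : ℂ) - (A - 1) ^ ((p - 1 : ℝ) : ℂ))) := by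
        ring
    _ = -(z ^ ((p - 1 : ℝ) : ℂ) * ((A - 1) ^ ((p - 1 : ℝ) : ℂ) - (1 - B) ^ ((p - 1 : ℝ) : ℂ))) := by
        rw [hexp]; ring
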